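/- If 𝒢 ⇉ M is a boundary action groupoid and V ⊆ M is an open subset, then the reduction 𝒢|_V ⇉ V is a boundary action groupoid; its unique open dense orbit is U ∩ V, where U is the open dense orbit of 𝒢. -/

import Mathlib

/-!
We model a (locally compact / Lie) groupoid `𝒢 ⇉ U` over a set of units
`U ⊆ X` by a type `A` of arrows together with (total) structural maps;
multiplication is a total function whose value is only relevant on composable
pairs.  Smoothness is modelled at the topological level.
-/

universe u v

/-- An (algebraic) groupoid with arrow space `A` over the set of units `U ⊆ X`. -/
structure GroupoidOn (X : Type u) (A : Type v) (U : Set X) where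
  d : A → X
  r : A → X
  unit : U → A
  inv : A → A
  mul : A → A → A
  d_mem : ∀ g, d g ∈ U
  r_mem : ∀ g, r g ∈ U
  d_unit : ∀ x : U, d (unit x) = x
  r_unit : ∀ x : U, r (unit x) = x
  d_inv : ∀ g, d (inv g) = r g
  r_inv : ∀ g, r (inv g) = d g
  d_mul : ∀ g h, d g = r h → d (mul g h) = d h
  r_mul : ∀ g h, d g = r h → r (mul g h) = r g
  mul_assoc' : ∀ g h k, d g = r h → d h = r k → mul (mul g h) k = mul g (mul h k)
  unit_mul : ∀ g, mul (unit ⟨r g, r_mem g⟩) g = g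
  mul_unit : ∀ g, mul g (unit ⟨d g, d_mem g⟩) = g
  mul_inv : ∀ g, mul g (inv g) = unit ⟨r g, r_mem g⟩
  inv_mul : ∀ g, mul (inv g) g = unit ⟨d g, d_mem g⟩

namespace GroupoidOn

variable {X : Type u} {A : Type v} {U : Set X}

/-- The reduction set `𝒢|_V = d⁻¹(V) ∩ r⁻¹(V)` of a groupoid to `V ⊆ X`. -/
def res (G : GroupoidOn X A U) (V : Set X) : Set A :=
  {g | G.d g ∈ V ∧ G.r g ∈ V}

end GroupoidOn

/-- `G` is a topological groupoid: continuous structural maps, `d` surjective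
(onto the units) and open. Together with local compactness of the arrow and unit
spaces this is the notion of a locally compact groupoid. -/
structure IsTopGroupoid {X : Type u} {A : Type v} {U : Set X}
    [TopologicalSpace X] [TopologicalSpace A] (G : GroupoidOn X A U) : Prop where
  continuous_d : Continuous G.d
  continuous_r : Continuous G.r
  continuous_unit : Continuous G.unit
  continuous_inv : Continuous G.inv
  continuousOn_mul : ContinuousOn (fun p : A × A => G.mul p.1 p.2)
    {p : A × A | G.d p.1 = G.r p.2}
  d_surj : U ⊆ Set.range G.d
  isOpenMap_d : IsOpenMap G.d

namespace GroupoidOn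

variable {X : Type u} {A : Type v} {U : Set X}

/-- A subset `S` of the units is invariant if the range of any arrow whose
domain lies in `S` also lies in `S`. -/
def IsInvariant (G : GroupoidOn X A U) (S : Set X) : Prop :=
  ∀ g, G.d g ∈ S → G.r g ∈ S

end GroupoidOn

/-- The pair groupoid of a subset `S ⊆ X`. -/
def pairGroupoid {X : Type u} (S : Set X) : GroupoidOn X (S × S) S where
  d p := p.2
  r p := p.1
  unit x := (x, x)
  inv p := (p.2, p.1)
  mul p q := (p.1, q.2)
  d_mem p := p.2.2
  r_mem p := p.1.2
  d_unit _ := rfl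
  r_unit _ := rfl
  d_inv _ := rfl
  r_inv _ := rfl
  d_mul _ _ _ := rfl
  r_mul _ _ _ := rfl
  mul_assoc' _ _ _ _ _ := rfl
  unit_mul g := by ext <;> rfl
  mul_unit g := by ext <;> rfl
  mul_inv g := by ext <;> rfl
  inv_mul g := by ext <;> rfl

/-- A continuous right action of a (topological) group `Γ` on a space `Y`.
(In our applications this models a *smooth* action of a Lie group on a
manifold; smoothness is modelled at the topological level.) -/
structure ContRightAction (Γ : Type*) (Y : Type*) [Group Γ] [TopologicalSpace Γ]
    [TopologicalSpace Y] where
  act : Y → Γ → Y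
  act_one : ∀ y, act y 1 = y
  act_mul : ∀ y g h, act y (g * h) = act (act y g) h
  continuous_act : Continuous fun p : Y × Γ => act p.1 p.2

/-- The action groupoid `Y ⋊ Γ` of a continuous right action: arrows `Y × Γ`,
`r (y, g) = y`, `d (y, g) = y · g⁻¹`, and `(y, h)(y·h⁻¹, g) = (y, gh)`. -/
def actionGroupoid {Γ : Type*} {Y : Type*} [Group Γ] [TopologicalSpace Γ]
    [TopologicalSpace Y] (ρ : ContRightAction Γ Y) :
    GroupoidOn Y (Y × Γ) Set.univ where
  d p := ρ.act p.1 p.2⁻¹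
  r p := p.1
  unit y := (y.1, 1)
  inv p := (ρ.act p.1 p.2⁻¹, p.2⁻¹)
  mul p q := (p.1, q.2 * p.2)
  d_mem _ := trivial
  r_mem _ := trivial
  d_unit y := by simp [ρ.act_one]
  r_unit y := rfl
  d_inv p := by
    show ρ.act (ρ.act p.1 p.2⁻¹) (p.2⁻¹)⁻¹ = p.1
    rw [← ρ.act_mul]; simp [ρ.act_one]
  r_inv p := rfl
  d_mul p q h := by
    show ρ.act p.1 (q.2 * p.2)⁻¹ = ρ.act q.1 q.2⁻¹
    rw [mul_inv_rev, ρ.act_mul]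
    exact congrArg (fun z => ρ.act z q.2⁻¹) h
  r_mul _ _ _ := rfl
  mul_assoc' p q k _ _ := by simp [mul_assoc]
  unit_mul g := by simp
  mul_unit g := by simp
  mul_inv g := by simp
  inv_mul g := by simp

/-- `AreRedIso G V H W` : the reductions `G|_V` and `H|_W` are isomorphic as
topological groupoids, via a homeomorphism of the unit sets `V ≃ₜ W` and a
compatible homeomorphism of the arrow spaces preserving domain, range and
multiplication. -/
def AreRedIso {X : Type*} [TopologicalSpace X] {A : Type*} [TopologicalSpace A]
    {S : Set X} (G : GroupoidOn X A S) (V : Set X)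
    {Y : Type*} [TopologicalSpace Y] {B : Type*} [TopologicalSpace B]
    {T : Set Y} (H : GroupoidOn Y B T) (W : Set Y) : Prop :=
  ∃ (base : V ≃ₜ W) (e : {g : A // g ∈ G.res V} ≃ₜ {b : B // b ∈ H.res W}),
    (∀ g : {g : A // g ∈ G.res V}, H.d (e g).1 = (base ⟨G.d g.1, g.2.1⟩ : Y)) ∧
    (∀ g : {g : A // g ∈ G.res V}, H.r (e g).1 = (base ⟨G.r g.1, g.2.2⟩ : Y)) ∧
    (∀ (g h : {g : A // g ∈ G.res V}) (hc : G.d g.1 = G.r h.1),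
      (e ⟨G.mul g.1 h.1,
          ⟨by rw [G.d_mul _ _ hc]; exact h.2.1,
           by rw [G.r_mul _ _ hc]; exact g.2.2⟩⟩).1 = H.mul (e g).1 (e h).1)

/-- `OrbitData G U` : `U` is an open dense invariant subset of the unit set `S`
of `G` on which `G` is the pair groupoid (`𝒢_U ≅ U × U`); such a `U` is the
(unique) open dense orbit of a boundary action groupoid. -/
def OrbitData {X : Type u} [TopologicalSpace X] {A : Type v} [TopologicalSpace A]
    {S : Set X} (G : GroupoidOn X A S) (U : Set X) : Prop :=
  U ⊆ S ∧ IsOpen U ∧ S ⊆ closure U ∧ G.IsInvariant U ∧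
    AreRedIso G U (pairGroupoid U) U

/-- `𝒢 ⇉ S` is a **boundary action groupoid**: a (Lie) groupoid, with an open
dense invariant subset `U` of the units on which it is the pair groupoid,
covered by reductions of action groupoids of (Lie) group actions, the family of
these reductions satisfying the weak gluing condition.  (Smoothness is modelled
at the topological level.) -/
structure IsBoundaryActionGroupoid {X : Type u} [TopologicalSpace X] {A : Type u}
    [TopologicalSpace A] {S : Set X} (G : GroupoidOn X A S) : Prop where
  top : IsTopGroupoid G
  -- (1) an open dense invariant subset `U ⊆ S` with `𝒢_U ≅ U × U`:
  orbit : ∃ U : Set X, OrbitData G U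
  -- (2) + (3) an open cover of the unit space by sets over which `𝒢` is a
  -- reduction of an action groupoid, satisfying the weak gluing condition:
  cover : ∃ (ι : Type u) (V : ι → Set X),
    (∀ i, IsOpen (V i)) ∧ (∀ x ∈ S, ∃ i, x ∈ V i) ∧
    (∀ i, ∃ (Y : Type u) (tY : TopologicalSpace Y) (Γ : Type u) (gΓ : Group Γ)
      (tΓ : TopologicalSpace Γ) (_ : @IsTopologicalGroup Γ tΓ gΓ)
      (ρ : @ContRightAction Γ Y gΓ tΓ tY) (W : Set Y),
      @IsOpen Y tY W ∧
      @AreRedIso X _ A _ S G (V i) Y tY (Y × Γ) (@instTopologicalSpaceProd Y Γ tY tΓ)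
        Set.univ (@actionGroupoid Γ Y gΓ tΓ tY ρ) W) ∧
    (∀ g h : A, G.d g = G.r h → ∃ i, g ∈ G.res (V i) ∧ h ∈ G.res (V i))

section Helpers

namespace GroupoidOn

variable {X : Type u} {A : Type v} {U : Set X}

lemma unit_eq (G : GroupoidOn X A U) {g : A} (hdr : G.d g = G.r g)
    (hmul : G.mul g g = g) : g = G.unit ⟨G.r g, G.r_mem g⟩ := by
  have h1 : G.mul (G.mul g g) (G.inv g) = G.mul g (G.inv g) := by rw [hmul]
  rw [G.mul_assoc' g g (G.inv g) hdr (G.r_inv g).symm, G.mul_inv] at h1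
  have h2 : G.unit ⟨G.r g, G.r_mem g⟩ = G.unit ⟨G.d g, G.d_mem g⟩ :=
    congrArg G.unit (Subtype.ext hdr.symm)
  rw [h2, G.mul_unit] at h1
  exact h1.trans h2.symm

lemma inv_eq (G : GroupoidOn X A U) {g h : A} (hc : G.d g = G.r h)
    (hgh : G.mul g h = G.unit ⟨G.r g, G.r_mem g⟩) : h = G.inv g := by
  have key : G.mul (G.inv g) (G.mul g h) = h := by
    rw [← G.mul_assoc' (G.inv g) g h (G.d_inv g) hc, G.inv_mul]
    have h2 : G.unit ⟨G.d g, G.d_mem g⟩ = G.unit ⟨G.r h, G.r_mem h⟩ :=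
      congrArg G.unit (Subtype.ext hc)
    rw [h2, G.unit_mul]
  rw [hgh] at key
  have h3 : G.unit ⟨G.r g, G.r_mem g⟩ = G.unit ⟨G.d (G.inv g), G.d_mem (G.inv g)⟩ :=
    congrArg G.unit (Subtype.ext (G.d_inv g).symm)
  rw [h3, G.mul_unit] at key
  exact key.symm

end GroupoidOn

/-- From a pair-groupoid iso: existence of an arrow with prescribed range/domain. -/
lemma exists_arrow {X : Type u} [TopologicalSpace X] {A : Type v} [TopologicalSpace A]
    {S : Set X} {G : GroupoidOn X A S} {U : Set X}
    (h : AreRedIso G U (pairGroupoid U) U) (p q : ↥U) :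
    ∃ g : {g : A // g ∈ G.res U}, G.r g.1 = ↑p ∧ G.d g.1 = ↑q := by
  obtain ⟨base, e, hd, hr, -⟩ := h
  refine ⟨e.symm ⟨(base p, base q), ⟨(base q).2, (base p).2⟩⟩, ?_, ?_⟩
  · have := hr (e.symm ⟨(base p, base q), ⟨(base q).2, (base p).2⟩⟩)
    rw [e.apply_symm_apply] at this
    have h2 : base p = base ⟨G.r (e.symm ⟨(base p, base q), ⟨(base q).2, (base p).2⟩⟩).1, _⟩ :=
      Subtype.ext this
    have := base.injective h2
    exact congrArg Subtype.val this.symm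
  · have := hd (e.symm ⟨(base p, base q), ⟨(base q).2, (base p).2⟩⟩)
    rw [e.apply_symm_apply] at this
    have h2 : base q = base ⟨G.d (e.symm ⟨(base p, base q), ⟨(base q).2, (base p).2⟩⟩).1, _⟩ :=
      Subtype.ext this
    have := base.injective h2
    exact congrArg Subtype.val this.symm

lemma orbit_subset {X : Type u} [TopologicalSpace X] {A : Type v} [TopologicalSpace A]
    {S : Set X} {G : GroupoidOn X A S} {U₁ U₂ : Set X}
    (h₁ : AreRedIso G U₁ (pairGroupoid U₁) U₁) (h₂ : G.IsInvariant U₂)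
    {x : X} (hx₁ : x ∈ U₁) (hx₂ : x ∈ U₂) : U₁ ⊆ U₂ := by
  intro y hy
  obtain ⟨g, hr, hd⟩ := exists_arrow h₁ (⟨y, hy⟩ : ↥U₁) (⟨x, hx₁⟩ : ↥U₁)
  have := h₂ g.1 (by rw [hd]; exact hx₂)
  rwa [hr] at this

lemma orbit_unique {X : Type u} [TopologicalSpace X] {A : Type v} [TopologicalSpace A]
    {S : Set X} {G : GroupoidOn X A S} {U₁ U₂ : Set X}
    (h₁ : OrbitData G U₁) (h₂ : OrbitData G U₂) : U₁ = U₂ := by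
  obtain ⟨hs₁, ho₁, hc₁, hi₁, hp₁⟩ := h₁
  obtain ⟨hs₂, ho₂, hc₂, hi₂, hp₂⟩ := h₂
  rcases U₂.eq_empty_or_nonempty with hU₂ | ⟨z, hz⟩
  · subst hU₂
    have : U₁ ⊆ (∅ : Set X) := fun y hy => by
      have : S ⊆ closure (∅ : Set X) := hc₂
      rw [closure_empty] at this
      exact this (hs₁ hy)
    exact Set.eq_empty_iff_forall_notMem.2 (fun y hy => this hy) ▸ rfl
  · have hzc : z ∈ closure U₁ := hc₁ (hs₂ hz)
    obtain ⟨w, hwU₂, hwU₁⟩ := mem_closure_iff.1 hzc U₂ ho₂ hz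
    exact Set.Subset.antisymm (orbit_subset hp₁ hi₂ hwU₁ hwU₂)
      (orbit_subset hp₂ hi₁ hwU₂ hwU₁)
set_option linter.unusedSectionVars false

section Transfer

variable {X : Type u} [TopologicalSpace X] {A : Type u} [TopologicalSpace A]
  {G : GroupoidOn X A Set.univ}
  {V : Set X}
  {A' : Type u} [TopologicalSpace A']
  {G' : GroupoidOn (↥V) A' Set.univ}
  (e : {g : A // g ∈ G.res V} ≃ₜ A')
  (he_d : ∀ g : {g : A // g ∈ G.res V}, (G'.d (e g) : X) = G.d g.1)
  (he_r : ∀ g : {g : A // g ∈ G.res V}, (G'.r (e g) : X) = G.r g.1)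
  (he_mul : ∀ (g h : {g : A // g ∈ G.res V}) (hc : G.d g.1 = G.r h.1),
      e ⟨G.mul g.1 h.1,
         ⟨by rw [G.d_mul _ _ hc]; exact h.2.1,
          by rw [G.r_mul _ _ hc]; exact g.2.2⟩⟩ = G'.mul (e g) (e h))

/-- The unit arrow of `G` at a point of `V`, as an element of `G.res V`. -/
def uarr (G : GroupoidOn X A Set.univ) (V : Set X) (v : ↥V) : {g : A // g ∈ G.res V} :=
  ⟨G.unit ⟨(v : X), trivial⟩,
   ⟨by rw [G.d_unit]; exact v.2, by rw [G.r_unit]; exact v.2⟩⟩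

/-- The inverse of an arrow of `G.res V`, as an element of `G.res V`. -/
def iarr (G : GroupoidOn X A Set.univ) (V : Set X) (g : {g : A // g ∈ G.res V}) :
    {g : A // g ∈ G.res V} :=
  ⟨G.inv g.1, ⟨by rw [G.d_inv]; exact g.2.2, by rw [G.r_inv]; exact g.2.1⟩⟩

include he_d in
lemma he_d' : ∀ a : A', (G'.d a : X) = G.d (e.symm a).1 := fun a => by
  have := he_d (e.symm a); rwa [e.apply_symm_apply] at this

include he_r in
lemma he_r' : ∀ a : A', (G'.r a : X) = G.r (e.symm a).1 := fun a => by
  have := he_r (e.symm a); rwa [e.apply_symm_apply] at this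

include he_d he_r he_mul in
lemma he_unit : ∀ x : ↥(Set.univ : Set ↥V), G'.unit x = e (uarr G V x.1) := by
  intro x
  set a := e (uarr G V x.1) with ha
  have hra : (G'.r a : X) = (x.1 : X) := by
    rw [ha, he_r]; exact G.r_unit ⟨(x.1 : X), trivial⟩
  have hda : (G'.d a : X) = (x.1 : X) := by
    rw [ha, he_d]; exact G.d_unit ⟨(x.1 : X), trivial⟩
  have hdr : G'.d a = G'.r a := Subtype.ext (hda.trans hra.symm)
  have hcomp : G.d (uarr G V x.1).1 = G.r (uarr G V x.1).1 := by
    show G.d (G.unit _) = G.r (G.unit _)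
    rw [G.d_unit, G.r_unit]
  have hmuu : G.mul (uarr G V x.1).1 (uarr G V x.1).1 = (uarr G V x.1).1 := by
    show G.mul (G.unit ⟨(x.1 : X), trivial⟩) (G.unit ⟨(x.1 : X), trivial⟩)
      = G.unit ⟨(x.1 : X), trivial⟩
    have h2 : G.unit ⟨G.r (G.unit ⟨(x.1 : X), trivial⟩), G.r_mem _⟩
        = G.unit ⟨(x.1 : X), trivial⟩ :=
      congrArg G.unit (Subtype.ext (G.r_unit ⟨(x.1 : X), trivial⟩))
    have h3 := G.unit_mul (G.unit ⟨(x.1 : X), trivial⟩)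
    rw [h2] at h3
    exact h3
  have hmul2 : G'.mul a a = a := by
    rw [ha, ← he_mul _ _ hcomp]
    exact congrArg e (Subtype.ext hmuu)
  have h4 := G'.unit_eq hdr hmul2
  have hx : (⟨G'.r a, G'.r_mem a⟩ : ↥(Set.univ : Set ↥V)) = x :=
    Subtype.ext (Subtype.ext hra)
  rw [h4, hx]

include he_d he_r he_mul in
lemma he_inv : ∀ g : {g : A // g ∈ G.res V}, G'.inv (e g) = e (iarr G V g) := by
  intro g
  have hc : G'.d (e g) = G'.r (e (iarr G V g)) := by
    apply Subtype.ext
    rw [he_d, he_r]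
    exact (G.r_inv g.1).symm
  have hc0 : G.d g.1 = G.r (iarr G V g).1 := (G.r_inv g.1).symm
  have hmm : G'.mul (e g) (e (iarr G V g)) = G'.unit ⟨G'.r (e g), G'.r_mem (e g)⟩ := by
    rw [← he_mul g (iarr G V g) hc0]
    have h1 : (⟨G.mul g.1 (iarr G V g).1,
        ⟨by rw [G.d_mul _ _ hc0]; exact (iarr G V g).2.1,
         by rw [G.r_mul _ _ hc0]; exact g.2.2⟩⟩ : {g : A // g ∈ G.res V})
        = uarr G V (G'.r (e g)) := by
      apply Subtype.ext
      show G.mul g.1 (G.inv g.1) = G.unit ⟨((G'.r (e g) : ↥V) : X), trivial⟩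
      rw [G.mul_inv]
      exact congrArg G.unit (Subtype.ext (he_r g).symm)
    rw [h1, ← he_unit e he_d he_r he_mul ⟨G'.r (e g), G'.r_mem (e g)⟩]
  exact (G'.inv_eq hc hmm).symm

include he_d he_r he_mul in
lemma he_inv' : ∀ a : A', G'.inv a = e (iarr G V (e.symm a)) := fun a => by
  have := he_inv e he_d he_r he_mul (e.symm a)
  rwa [e.apply_symm_apply] at this

include he_d he_r he_mul in
lemma he_mul' : ∀ (a b : A') (hc : G'.d a = G'.r b)
    (pf : G.mul (e.symm a).1 (e.symm b).1 ∈ G.res V),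
    G'.mul a b = e ⟨G.mul (e.symm a).1 (e.symm b).1, pf⟩ := by
  intro a b hc pf
  have hc0 : G.d (e.symm a).1 = G.r (e.symm b).1 := by
    rw [← he_d' e he_d a, ← he_r' e he_r b, hc]
  have := he_mul (e.symm a) (e.symm b) hc0
  rw [e.apply_symm_apply, e.apply_symm_apply] at this
  exact this.symm

include he_d he_r he_mul in
lemma htop' (hGtop : IsTopGroupoid G) (hV : IsOpen V) : IsTopGroupoid G' := by
  have hred : G'.d = fun a => (⟨G.d (e.symm a).1, (e.symm a).2.1⟩ : ↥V) :=
    funext fun a => Subtype.ext (he_d' e he_d a)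
  have hrer : G'.r = fun a => (⟨G.r (e.symm a).1, (e.symm a).2.2⟩ : ↥V) :=
    funext fun a => Subtype.ext (he_r' e he_r a)
  have cd : Continuous G'.d := by
    rw [hred]
    exact ((hGtop.continuous_d.comp continuous_subtype_val).comp
      e.symm.continuous).subtype_mk _
  have cr : Continuous G'.r := by
    rw [hrer]
    exact ((hGtop.continuous_r.comp continuous_subtype_val).comp
      e.symm.continuous).subtype_mk _
  refine ⟨cd, cr, ?_, ?_, ?_, ?_, ?_⟩
  · have : G'.unit = fun x => e (uarr G V x.1) :=
      funext fun x => he_unit e he_d he_r he_mul x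
    rw [this]
    apply e.continuous.comp
    apply Continuous.subtype_mk
    exact hGtop.continuous_unit.comp
      ((continuous_subtype_val.comp continuous_subtype_val).subtype_mk _)
  · have : G'.inv = fun a => e (iarr G V (e.symm a)) :=
      funext fun a => he_inv' e he_d he_r he_mul a
    rw [this]
    apply e.continuous.comp
    apply Continuous.subtype_mk
    exact (hGtop.continuous_inv.comp continuous_subtype_val).comp e.symm.continuous
  · rw [continuousOn_iff_continuous_restrict]
    have hcomp : ∀ p : {p : A' × A' // p ∈ {p : A' × A' | G'.d p.1 = G'.r p.2}},
        G.d (e.symm p.1.1).1 = G.r (e.symm p.1.2).1 := fun p => by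
      rw [← he_d' e he_d, ← he_r' e he_r, p.2]
    have hmem : ∀ p : {p : A' × A' // p ∈ {p : A' × A' | G'.d p.1 = G'.r p.2}},
        G.mul (e.symm p.1.1).1 (e.symm p.1.2).1 ∈ G.res V := fun p =>
      ⟨by rw [G.d_mul _ _ (hcomp p)]; exact (e.symm p.1.2).2.1,
       by rw [G.r_mul _ _ (hcomp p)]; exact (e.symm p.1.1).2.2⟩
    have hfun : Set.restrict {p : A' × A' | G'.d p.1 = G'.r p.2}
          (fun p : A' × A' => G'.mul p.1 p.2)
        = fun p => e ⟨G.mul (e.symm p.1.1).1 (e.symm p.1.2).1, hmem p⟩ :=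
      funext fun p => he_mul' e he_d he_r he_mul p.1.1 p.1.2 p.2 (hmem p)
    change Continuous (Set.restrict {p : A' × A' | G'.d p.1 = G'.r p.2}
      (fun p : A' × A' => G'.mul p.1 p.2))
    rw [hfun]
    apply e.continuous.comp
    apply Continuous.subtype_mk
    have c1 : Continuous fun p : {p : A' × A' // p ∈ {p : A' × A' | G'.d p.1 = G'.r p.2}} =>
        (⟨((e.symm p.1.1).1, (e.symm p.1.2).1), hcomp p⟩
          : {q : A × A // q ∈ {q : A × A | G.d q.1 = G.r q.2}}) := by
      apply Continuous.subtype_mk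
      exact ((continuous_subtype_val.comp (e.symm.continuous.comp
        (continuous_fst.comp continuous_subtype_val))).prodMk
        (continuous_subtype_val.comp (e.symm.continuous.comp
        (continuous_snd.comp continuous_subtype_val))))
    have c2 := continuousOn_iff_continuous_restrict.1 hGtop.continuousOn_mul
    exact c2.comp c1
  · intro x _
    exact ⟨G'.unit ⟨x, trivial⟩, G'.d_unit ⟨x, trivial⟩⟩
  · intro O hO
    have hresopen : IsOpen {g : A | g ∈ G.res V} := by
      have h0 : {g : A | g ∈ G.res V} = G.d ⁻¹' V ∩ G.r ⁻¹' V := rfl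
      rw [h0]
      exact (hV.preimage hGtop.continuous_d).inter (hV.preimage hGtop.continuous_r)
    have himg : G'.d '' O = Subtype.val ⁻¹' (G.d '' (Subtype.val '' (e ⁻¹' O))) := by
      ext v
      constructor
      · rintro ⟨a, haO, rfl⟩
        exact ⟨(e.symm a).1, ⟨e.symm a, by simp [haO], rfl⟩, (he_d' e he_d a).symm⟩
      · rintro ⟨a0, ⟨g, hgO, rfl⟩, hda⟩
        exact ⟨e g, hgO, Subtype.ext ((he_d g).trans hda)⟩
    rw [himg]
    have o1 : IsOpen (e ⁻¹' O) := hO.preimage e.continuous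
    have o2 : IsOpen (Subtype.val '' (e ⁻¹' O)) := hresopen.isOpenMap_subtype_val _ o1
    have o3 : IsOpen (G.d '' (Subtype.val '' (e ⁻¹' O))) := hGtop.isOpenMap_d _ o2
    exact o3.preimage continuous_subtype_val

end Transfer
section Transfer2

variable {X : Type u} [TopologicalSpace X] {A : Type u} [TopologicalSpace A]
  {G : GroupoidOn X A Set.univ}
  {V : Set X}
  {A' : Type u} [TopologicalSpace A']
  {G' : GroupoidOn (↥V) A' Set.univ}
  (e : {g : A // g ∈ G.res V} ≃ₜ A')
  (he_d : ∀ g : {g : A // g ∈ G.res V}, (G'.d (e g) : X) = G.d g.1)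
  (he_r : ∀ g : {g : A // g ∈ G.res V}, (G'.r (e g) : X) = G.r g.1)
  (he_mul : ∀ (g h : {g : A // g ∈ G.res V}) (hc : G.d g.1 = G.r h.1),
      e ⟨G.mul g.1 h.1,
         ⟨by rw [G.d_mul _ _ hc]; exact h.2.1,
          by rw [G.r_mul _ _ hc]; exact g.2.2⟩⟩ = G'.mul (e g) (e h))

/-- The homeomorphism `(r, d) : G.res U ≃ₜ U × U` extracted from a pair-groupoid iso. -/
lemma exists_rd_homeo {U : Set X} (h : AreRedIso G U (pairGroupoid U) U) :
    ∃ Ψ : ({g : A // g ∈ G.res U} ≃ₜ ↥U × ↥U),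
      ∀ g, Ψ g = (⟨G.r g.1, g.2.2⟩, ⟨G.d g.1, g.2.1⟩) := by
  obtain ⟨base₀, e₀, hd₀, hr₀, -⟩ := h
  refine ⟨e₀.trans
    { toFun := fun p => (base₀.symm p.1.1, base₀.symm p.1.2)
      invFun := fun q => ⟨(base₀ q.1, base₀ q.2), ⟨(base₀ q.2).2, (base₀ q.1).2⟩⟩
      left_inv := fun p => by apply Subtype.ext; apply Prod.ext <;> simp
      right_inv := fun q => by apply Prod.ext <;> simp
      continuous_toFun := by
        exact (base₀.symm.continuous.comp
            ((continuous_fst.comp continuous_subtype_val))).prodMk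
          (base₀.symm.continuous.comp ((continuous_snd.comp continuous_subtype_val)))
      continuous_invFun := by
        exact Continuous.subtype_mk
          ((base₀.continuous.comp continuous_fst).prodMk
            (base₀.continuous.comp continuous_snd)) _ }, ?_⟩
  intro g
  show (base₀.symm (e₀ g).1.1, base₀.symm (e₀ g).1.2) = _
  have h1 : (e₀ g).1.1 = base₀ ⟨G.r g.1, g.2.2⟩ := Subtype.ext (hr₀ g)
  have h2 : (e₀ g).1.2 = base₀ ⟨G.d g.1, g.2.1⟩ := Subtype.ext (hd₀ g)
  rw [h1, h2, base₀.symm_apply_apply, base₀.symm_apply_apply]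

include he_d he_r he_mul in
lemma orbit_transfer (hGtop : IsTopGroupoid G) (hV : IsOpen V)
    {U : Set X} (hU : OrbitData G U) :
    OrbitData G' (Subtype.val ⁻¹' (U ∩ V)) := by
  have ht' : IsTopGroupoid G' := htop' e he_d he_r he_mul hGtop hV
  obtain ⟨hUsub, hUopen, hUdense, hUinv, hUiso⟩ := hU
  obtain ⟨Ψ, ΨK⟩ := exists_rd_homeo hUiso
  have ΨKr : ∀ pq : ↥U × ↥U, G.r (Ψ.symm pq).1 = ↑pq.1 ∧ G.d (Ψ.symm pq).1 = ↑pq.2 := by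
    intro pq
    have h1 := ΨK (Ψ.symm pq)
    rw [Ψ.apply_symm_apply] at h1
    constructor
    · exact congrArg Subtype.val (congrArg Prod.fst h1.symm)
    · exact congrArg Subtype.val (congrArg Prod.snd h1.symm)
  have inj : ∀ g h : {g : A // g ∈ G.res U}, G.r g.1 = G.r h.1 → G.d g.1 = G.d h.1 →
      g = h := by
    intro g h h1 h2
    apply Ψ.injective
    rw [ΨK g, ΨK h]
    exact Prod.ext (Subtype.ext h1) (Subtype.ext h2)
  refine ⟨Set.subset_univ _, (hUopen.inter hV).preimage continuous_subtype_val, ?_, ?_, ?_⟩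
  · -- density
    intro x _
    rw [mem_closure_iff]
    intro O hO hxO
    have h1 : (↑x : X) ∈ closure U := hUdense (Set.mem_univ _)
    have h2 : IsOpen (Subtype.val '' O) := hV.isOpenMap_subtype_val _ hO
    obtain ⟨z, hz1, hz2⟩ := mem_closure_iff.1 h1 _ h2 ⟨x, hxO, rfl⟩
    obtain ⟨w, hwO, rfl⟩ := hz1
    exact ⟨w, hwO, hz2, w.2⟩
  · -- invariance
    intro a ha
    have h1 : G.d (e.symm a).1 ∈ U := by
      rw [← he_d' e he_d a]; exact ha.1
    have h2 : G.r (e.symm a).1 ∈ U := hUinv _ h1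
    exact ⟨by rw [he_r' e he_r a]; exact h2, (G'.r a).2⟩
  · -- the pair groupoid iso for the reduction
    refine ⟨Homeomorph.refl _,
      { toEquiv :=
        { toFun := fun a' => ⟨(⟨G'.r a'.1, a'.2.2⟩, ⟨G'.d a'.1, a'.2.1⟩),
            ⟨a'.2.1, a'.2.2⟩⟩
          invFun := fun p =>
            ⟨e ⟨(Ψ.symm (⟨(p.1.1.1 : X), p.1.1.2.1⟩, ⟨(p.1.2.1 : X), p.1.2.2.1⟩)).1,
                ⟨by rw [(ΨKr _).2]; exact p.1.2.1.2,
                 by rw [(ΨKr _).1]; exact p.1.1.1.2⟩⟩,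
             ⟨by simp only [Set.mem_preimage]
                 rw [he_d, (ΨKr _).2]
                 exact p.1.2.2,
              by simp only [Set.mem_preimage]
                 rw [he_r, (ΨKr _).1]
                 exact p.1.1.2⟩⟩
          left_inv := fun a' => by
            apply Subtype.ext
            have hg₀ : (e.symm a'.1).1 ∈ G.res U :=
              ⟨by rw [← he_d' e he_d a'.1]; exact a'.2.1.1,
               by rw [← he_r' e he_r a'.1]; exact a'.2.2.1⟩
            have key : (Ψ.symm (⟨(G'.r a'.1 : X), a'.2.2.1⟩, ⟨(G'.d a'.1 : X), a'.2.1.1⟩))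
                = ⟨(e.symm a'.1).1, hg₀⟩ := by
              apply inj
              · rw [(ΨKr _).1, he_r' e he_r a'.1]
              · rw [(ΨKr _).2, he_d' e he_d a'.1]
            show e ⟨(Ψ.symm (⟨(G'.r a'.1 : X), _⟩, ⟨(G'.d a'.1 : X), _⟩)).1, _⟩ = a'.1
            have key2 : (⟨(Ψ.symm (⟨(G'.r a'.1 : X), a'.2.2.1⟩,
                  ⟨(G'.d a'.1 : X), a'.2.1.1⟩)).1,
                  ⟨by rw [(ΨKr _).2]; exact (G'.d a'.1).2,
                   by rw [(ΨKr _).1]; exact (G'.r a'.1).2⟩⟩ : {g : A // g ∈ G.res V})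
                = e.symm a'.1 := Subtype.ext (congrArg (Subtype.val : {g : A // g ∈ G.res U} → A) key)
            exact (congrArg e key2).trans (e.apply_symm_apply a'.1)
          right_inv := fun p => by
            apply Subtype.ext
            apply Prod.ext
            · apply Subtype.ext
              apply Subtype.ext
              show (G'.r (e ⟨(Ψ.symm _).1, _⟩) : X) = ((p.1.1 : ↥V) : X)
              rw [he_r, (ΨKr _).1]
            · apply Subtype.ext
              apply Subtype.ext
              show (G'.d (e ⟨(Ψ.symm _).1, _⟩) : X) = ((p.1.2 : ↥V) : X)
              rw [he_d, (ΨKr _).2] }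
        continuous_toFun := by
          apply Continuous.subtype_mk
          apply Continuous.prodMk
          · exact ((ht'.continuous_r.comp continuous_subtype_val).subtype_mk _)
          · exact ((ht'.continuous_d.comp continuous_subtype_val).subtype_mk _)
        continuous_invFun := by
          apply Continuous.subtype_mk
          apply e.continuous.comp
          apply Continuous.subtype_mk
          apply continuous_subtype_val.comp
          apply Ψ.symm.continuous.comp
          apply Continuous.prodMk
          · exact (((continuous_subtype_val.comp continuous_subtype_val).comp
              (continuous_fst.comp continuous_subtype_val)).subtype_mk _)
          · exact (((continuous_subtype_val.comp continuous_subtype_val).comp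
              (continuous_snd.comp continuous_subtype_val)).subtype_mk _) },
      fun a' => rfl, fun a' => rfl, ?_⟩
    intro a' b' hc
    exact Prod.ext (Subtype.ext (G'.r_mul _ _ hc)) (Subtype.ext (G'.d_mul _ _ hc))

end Transfer2
section Transfer3

variable {X : Type u} [TopologicalSpace X] {A : Type u} [TopologicalSpace A]
  {G : GroupoidOn X A Set.univ}
  {V : Set X}
  {A' : Type u} [TopologicalSpace A']
  {G' : GroupoidOn (↥V) A' Set.univ}
  (e : {g : A // g ∈ G.res V} ≃ₜ A')
  (he_d : ∀ g : {g : A // g ∈ G.res V}, (G'.d (e g) : X) = G.d g.1)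
  (he_r : ∀ g : {g : A // g ∈ G.res V}, (G'.r (e g) : X) = G.r g.1)
  (he_mul : ∀ (g h : {g : A // g ∈ G.res V}) (hc : G.d g.1 = G.r h.1),
      e ⟨G.mul g.1 h.1,
         ⟨by rw [G.d_mul _ _ hc]; exact h.2.1,
          by rw [G.r_mul _ _ hc]; exact g.2.2⟩⟩ = G'.mul (e g) (e h))

include he_d he_r he_mul in
lemma cover_transfer (hV : IsOpen V)
    (hc : ∃ (ι : Type u) (Vc : ι → Set X),
      (∀ i, IsOpen (Vc i)) ∧ (∀ x ∈ (Set.univ : Set X), ∃ i, x ∈ Vc i) ∧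
      (∀ i, ∃ (Y : Type u) (tY : TopologicalSpace Y) (Γ : Type u) (gΓ : Group Γ)
        (tΓ : TopologicalSpace Γ) (_ : @IsTopologicalGroup Γ tΓ gΓ)
        (ρ : @ContRightAction Γ Y gΓ tΓ tY) (W : Set Y),
        @IsOpen Y tY W ∧
        @AreRedIso X _ A _ Set.univ G (Vc i) Y tY (Y × Γ)
          (@instTopologicalSpaceProd Y Γ tY tΓ)
          Set.univ (@actionGroupoid Γ Y gΓ tΓ tY ρ) W) ∧
      (∀ g h : A, G.d g = G.r h → ∃ i, g ∈ G.res (Vc i) ∧ h ∈ G.res (Vc i))) :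
    ∃ (ι : Type u) (Vc : ι → Set ↥V),
      (∀ i, IsOpen (Vc i)) ∧ (∀ x ∈ (Set.univ : Set ↥V), ∃ i, x ∈ Vc i) ∧
      (∀ i, ∃ (Y : Type u) (tY : TopologicalSpace Y) (Γ : Type u) (gΓ : Group Γ)
        (tΓ : TopologicalSpace Γ) (_ : @IsTopologicalGroup Γ tΓ gΓ)
        (ρ : @ContRightAction Γ Y gΓ tΓ tY) (W : Set Y),
        @IsOpen Y tY W ∧
        @AreRedIso (↥V) _ A' _ Set.univ G' (Vc i) Y tY (Y × Γ)
          (@instTopologicalSpaceProd Y Γ tY tΓ)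
          Set.univ (@actionGroupoid Γ Y gΓ tΓ tY ρ) W) ∧
      (∀ g h : A', G'.d g = G'.r h → ∃ i, g ∈ G'.res (Vc i) ∧ h ∈ G'.res (Vc i)) := by
  obtain ⟨ι, Vc, hVo, hVcov, hVact, hVglue⟩ := hc
  refine ⟨ι, fun i => Subtype.val ⁻¹' (Vc i), fun i => (hVo i).preimage continuous_subtype_val,
    fun x _ => hVcov (x : X) (Set.mem_univ _), ?_, ?_⟩
  swap
  · -- weak gluing
    intro a b hab
    have hc0 : G.d (e.symm a).1 = G.r (e.symm b).1 := by
      rw [← he_d' e he_d a, ← he_r' e he_r b, hab]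
    obtain ⟨i, hga, hgb⟩ := hVglue (e.symm a).1 (e.symm b).1 hc0
    refine ⟨i, ⟨?_, ?_⟩, ⟨?_, ?_⟩⟩
    · show (G'.d a : X) ∈ Vc i; rw [he_d' e he_d a]; exact hga.1
    · show (G'.r a : X) ∈ Vc i; rw [he_r' e he_r a]; exact hga.2
    · show (G'.d b : X) ∈ Vc i; rw [he_d' e he_d b]; exact hgb.1
    · show (G'.r b : X) ∈ Vc i; rw [he_r' e he_r b]; exact hgb.2
  intro i
  obtain ⟨Y, tY, Γ, gΓ, tΓ, tg, ρ, W, hW, hiso⟩ := hVact i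
  obtain ⟨base, ei, hdi, hri, hmi⟩ := hiso
  set S : Set ↥V := Subtype.val ⁻¹' (Vc i) with hS
  set W' : Set Y := (fun x : ↥(Vc i) => ((base x : ↥W) : Y)) '' {x : ↥(Vc i) | (x : X) ∈ V}
    with hW'
  have F0 : W' ⊆ W := by rintro y ⟨x, hx, rfl⟩; exact (base x).2
  have F1 : ∀ x : ↥(Vc i), ((base x : ↥W) : Y) ∈ W' ↔ (x : X) ∈ V := by
    intro x
    constructor
    · rintro ⟨x', hx', hxx⟩
      have : x' = x := base.injective (Subtype.ext hxx)
      rw [← this]; exact hx'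
    · intro hx
      exact ⟨x, hx, rfl⟩
  have hW'open : IsOpen W' := by
    have h1 : IsOpen {x : ↥(Vc i) | (x : X) ∈ V} := hV.preimage continuous_subtype_val
    have h2 : IsOpenMap (fun x : ↥(Vc i) => ((base x : ↥W) : Y)) :=
      (hW.isOpenMap_subtype_val).comp base.isOpenMap
    exact h2 _ h1
  refine ⟨Y, tY, Γ, gΓ, tΓ, tg, ρ, W', hW'open, ?_⟩
  -- abbreviations
  have mres : ∀ a' : {a' : A' // a' ∈ G'.res S}, (e.symm a'.1).1 ∈ G.res (Vc i) :=
    fun a' => ⟨by rw [← he_d' e he_d]; exact a'.2.1, by rw [← he_r' e he_r]; exact a'.2.2⟩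
  have pfW : ∀ a' : {a' : A' // a' ∈ G'.res S},
      (ei ⟨(e.symm a'.1).1, mres a'⟩).1 ∈ (@actionGroupoid Γ Y gΓ tΓ tY ρ).res W' := by
    intro a'
    constructor
    · rw [hdi ⟨(e.symm a'.1).1, mres a'⟩]
      exact (F1 _).2 (e.symm a'.1).2.1
    · rw [hri ⟨(e.symm a'.1).1, mres a'⟩]
      exact (F1 _).2 (e.symm a'.1).2.2
  have bW : ∀ b : {b : Y × Γ // b ∈ (@actionGroupoid Γ Y gΓ tΓ tY ρ).res W'},
      b.1 ∈ (@actionGroupoid Γ Y gΓ tΓ tY ρ).res W := fun b => ⟨F0 b.2.1, F0 b.2.2⟩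
  have hdb : ∀ b : {b : Y × Γ // b ∈ (@actionGroupoid Γ Y gΓ tΓ tY ρ).res W'},
      (@actionGroupoid Γ Y gΓ tΓ tY ρ).d b.1
        = ((base ⟨G.d (ei.symm ⟨b.1, bW b⟩).1, (ei.symm ⟨b.1, bW b⟩).2.1⟩ : ↥W) : Y) := by
    intro b
    have := hdi (ei.symm ⟨b.1, bW b⟩)
    rwa [ei.apply_symm_apply] at this
  have hrb : ∀ b : {b : Y × Γ // b ∈ (@actionGroupoid Γ Y gΓ tΓ tY ρ).res W'},
      (@actionGroupoid Γ Y gΓ tΓ tY ρ).r b.1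
        = ((base ⟨G.r (ei.symm ⟨b.1, bW b⟩).1, (ei.symm ⟨b.1, bW b⟩).2.2⟩ : ↥W) : Y) := by
    intro b
    have := hri (ei.symm ⟨b.1, bW b⟩)
    rwa [ei.apply_symm_apply] at this
  have dV : ∀ b : {b : Y × Γ // b ∈ (@actionGroupoid Γ Y gΓ tΓ tY ρ).res W'},
      (ei.symm ⟨b.1, bW b⟩).1 ∈ G.res V := by
    intro b
    constructor
    · exact (F1 _).1 (by rw [← hdb b]; exact b.2.1)
    · exact (F1 _).1 (by rw [← hrb b]; exact b.2.2)
  have memS : ∀ b : {b : Y × Γ // b ∈ (@actionGroupoid Γ Y gΓ tΓ tY ρ).res W'},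
      e ⟨(ei.symm ⟨b.1, bW b⟩).1, dV b⟩ ∈ G'.res S := by
    intro b
    constructor
    · show (G'.d _ : ↥V) ∈ Subtype.val ⁻¹' (Vc i)
      simp only [Set.mem_preimage]
      rw [he_d]
      exact (ei.symm ⟨b.1, bW b⟩).2.1
    · show (G'.r _ : ↥V) ∈ Subtype.val ⁻¹' (Vc i)
      simp only [Set.mem_preimage]
      rw [he_r]
      exact (ei.symm ⟨b.1, bW b⟩).2.2
  refine ⟨
    { toEquiv :=
      { toFun := fun x =>
          ⟨((base ⟨(x.1 : X), x.2⟩ : ↥W) : Y), ⟨⟨(x.1 : X), x.2⟩, x.1.2, rfl⟩⟩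
        invFun := fun y =>
          ⟨⟨((base.symm ⟨y.1, F0 y.2⟩ : ↥(Vc i)) : X),
            (F1 _).1 (by rw [base.apply_symm_apply]; exact y.2)⟩,
           (base.symm ⟨y.1, F0 y.2⟩).2⟩
        left_inv := fun x => by
          apply Subtype.ext; apply Subtype.ext
          show ((base.symm ⟨((base ⟨(x.1 : X), x.2⟩ : ↥W) : Y), _⟩ : ↥(Vc i)) : X)
            = ((x.1 : ↥V) : X)
          have h1 : (⟨((base ⟨(x.1 : X), x.2⟩ : ↥W) : Y),
              F0 (⟨⟨(x.1 : X), x.2⟩, x.1.2, rfl⟩ :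
                ((base ⟨(x.1 : X), x.2⟩ : ↥W) : Y) ∈ W')⟩ : ↥W)
              = base ⟨(x.1 : X), x.2⟩ := Subtype.ext rfl
          rw [h1, base.symm_apply_apply]
        right_inv := fun y => by
          apply Subtype.ext
          show ((base ⟨((base.symm ⟨y.1, F0 y.2⟩ : ↥(Vc i)) : X), _⟩ : ↥W) : Y) = y.1
          have h1 : (⟨((base.symm ⟨y.1, F0 y.2⟩ : ↥(Vc i)) : X),
              (base.symm ⟨y.1, F0 y.2⟩).2⟩ : ↥(Vc i)) = base.symm ⟨y.1, F0 y.2⟩ :=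
            Subtype.ext rfl
          rw [h1, base.apply_symm_apply] }
      continuous_toFun := by
        apply Continuous.subtype_mk
        exact continuous_subtype_val.comp (base.continuous.comp
          (((continuous_subtype_val.comp continuous_subtype_val)).subtype_mk _))
      continuous_invFun := by
        apply Continuous.subtype_mk
        apply Continuous.subtype_mk
        exact continuous_subtype_val.comp (base.symm.continuous.comp
          ((continuous_subtype_val.subtype_mk _))) },
      { toEquiv :=
        { toFun := fun a' => ⟨(ei ⟨(e.symm a'.1).1, mres a'⟩).1, pfW a'⟩
          invFun := fun b => ⟨e ⟨(ei.symm ⟨b.1, bW b⟩).1, dV b⟩, memS b⟩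
          left_inv := fun a' => by
            apply Subtype.ext
            have h1 : (⟨(ei ⟨(e.symm a'.1).1, mres a'⟩).1,
                bW ⟨(ei ⟨(e.symm a'.1).1, mres a'⟩).1, pfW a'⟩⟩
                : {b : Y × Γ // b ∈ (@actionGroupoid Γ Y gΓ tΓ tY ρ).res W})
                = ei ⟨(e.symm a'.1).1, mres a'⟩ := Subtype.ext rfl
            have h2 := (congrArg ei.symm h1).trans
              (ei.symm_apply_apply ⟨(e.symm a'.1).1, mres a'⟩)
            have h3 : (⟨(ei.symm ⟨(ei ⟨(e.symm a'.1).1, mres a'⟩).1,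
                  bW ⟨(ei ⟨(e.symm a'.1).1, mres a'⟩).1, pfW a'⟩⟩).1,
                dV ⟨(ei ⟨(e.symm a'.1).1, mres a'⟩).1, pfW a'⟩⟩
                : {g : A // g ∈ G.res V}) = e.symm a'.1 :=
              Subtype.ext (congrArg (Subtype.val : {g : A // g ∈ G.res (Vc i)} → A) h2)
            exact (congrArg e h3).trans (e.apply_symm_apply a'.1)
          right_inv := fun b => by
            have h1 : (⟨(e.symm (e ⟨(ei.symm ⟨b.1, bW b⟩).1, dV b⟩)).1,
                mres ⟨e ⟨(ei.symm ⟨b.1, bW b⟩).1, dV b⟩, memS b⟩⟩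
                : {g : A // g ∈ G.res (Vc i)}) = ei.symm ⟨b.1, bW b⟩ := by
              apply Subtype.ext
              show (e.symm (e ⟨(ei.symm ⟨b.1, bW b⟩).1, dV b⟩)).1 = (ei.symm ⟨b.1, bW b⟩).1
              rw [e.symm_apply_apply]
            have h2 := (congrArg ei h1).trans (ei.apply_symm_apply ⟨b.1, bW b⟩)
            exact Subtype.ext (congrArg
              (Subtype.val : {b : Y × Γ // b ∈ (@actionGroupoid Γ Y gΓ tΓ tY ρ).res W} → Y × Γ) h2) }
        continuous_toFun := by
          apply Continuous.subtype_mk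
          apply continuous_subtype_val.comp
          apply ei.continuous.comp
          apply Continuous.subtype_mk
          exact continuous_subtype_val.comp
            (e.symm.continuous.comp continuous_subtype_val)
        continuous_invFun := by
          apply Continuous.subtype_mk
          apply e.continuous.comp
          apply Continuous.subtype_mk
          apply continuous_subtype_val.comp
          apply ei.symm.continuous.comp
          exact Continuous.subtype_mk continuous_subtype_val _ },
    ?_, ?_, ?_⟩
  · -- compat d
    intro a'
    show (@actionGroupoid Γ Y gΓ tΓ tY ρ).d (ei ⟨(e.symm a'.1).1, mres a'⟩).1 = _
    rw [hdi ⟨(e.symm a'.1).1, mres a'⟩]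
    show _ = ((base ⟨((G'.d a'.1 : ↥V) : X), a'.2.1⟩ : ↥W) : Y)
    have h1 : (⟨G.d (e.symm a'.1).1, (mres a').1⟩ : ↥(Vc i))
        = ⟨((G'.d a'.1 : ↥V) : X), a'.2.1⟩ := Subtype.ext (he_d' e he_d a'.1).symm
    rw [h1]
  · -- compat r
    intro a'
    show (@actionGroupoid Γ Y gΓ tΓ tY ρ).r (ei ⟨(e.symm a'.1).1, mres a'⟩).1 = _
    rw [hri ⟨(e.symm a'.1).1, mres a'⟩]
    show _ = ((base ⟨((G'.r a'.1 : ↥V) : X), a'.2.2⟩ : ↥W) : Y)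
    have h1 : (⟨G.r (e.symm a'.1).1, (mres a').2⟩ : ↥(Vc i))
        = ⟨((G'.r a'.1 : ↥V) : X), a'.2.2⟩ := Subtype.ext (he_r' e he_r a'.1).symm
    rw [h1]
  · -- compat mul
    intro a' b' hcc
    have hc0 : G.d (e.symm a'.1).1 = G.r (e.symm b'.1).1 := by
      rw [← he_d' e he_d a'.1, ← he_r' e he_r b'.1, hcc]
    have pf2 : G.mul (e.symm a'.1).1 (e.symm b'.1).1 ∈ G.res V :=
      ⟨by rw [G.d_mul _ _ hc0]; exact (e.symm b'.1).2.1,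
       by rw [G.r_mul _ _ hc0]; exact (e.symm a'.1).2.2⟩
    have hmulG : e.symm (G'.mul a'.1 b'.1)
        = ⟨G.mul (e.symm a'.1).1 (e.symm b'.1).1, pf2⟩ := by
      rw [he_mul' e he_d he_r he_mul a'.1 b'.1 hcc pf2, e.symm_apply_apply]
    have hmres : ∀ (z : {a' : A' // a' ∈ G'.res S}),
        (⟨(e.symm z.1).1, mres z⟩ : {g : A // g ∈ G.res (Vc i)})
          = ⟨(e.symm z.1).1, mres z⟩ := fun z => rfl
    have step1 : (⟨(e.symm (G'.mul a'.1 b'.1)).1,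
          mres ⟨G'.mul a'.1 b'.1, by
            exact ⟨by rw [Set.mem_preimage]
                      have := congrArg Subtype.val (G'.d_mul a'.1 b'.1 hcc)
                      rw [this]; exact b'.2.1,
                   by rw [Set.mem_preimage]
                      have := congrArg Subtype.val (G'.r_mul a'.1 b'.1 hcc)
                      rw [this]; exact a'.2.2⟩⟩⟩ : {g : A // g ∈ G.res (Vc i)})
        = ⟨G.mul (e.symm a'.1).1 (e.symm b'.1).1,
           ⟨by rw [G.d_mul _ _ hc0]; exact (mres b').1,
            by rw [G.r_mul _ _ hc0]; exact (mres a').2⟩⟩ :=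
      Subtype.ext (congrArg (Subtype.val : {g : A // g ∈ G.res V} → A) hmulG)
    show (ei _).1 = _
    rw [step1]
    have hmm := hmi ⟨(e.symm a'.1).1, mres a'⟩ ⟨(e.symm b'.1).1, mres b'⟩ hc0
    exact hmm
/-- If `𝒢 ⇉ M` is a boundary action groupoid and `V ⊆ M` is
an open subset, then the reduction `𝒢|_V ⇉ V` is a boundary action groupoid;
its unique open dense orbit is `U ∩ V`, where `U` is the open dense orbit of
`𝒢`.  (The reduction is given here as any groupoid `𝒢' ⇉ V` identified with
`d⁻¹(V) ∩ r⁻¹(V)` through a homeomorphism `e` commuting with the structural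
maps over the canonical inclusion `V → M`.) -/
theorem statement_9 {X : Type u} [TopologicalSpace X] [T2Space X]
    [LocallyCompactSpace X] {A : Type u} [TopologicalSpace A]
    (G : GroupoidOn X A Set.univ) (hG : IsBoundaryActionGroupoid G)
    (V : Set X) (hV : IsOpen V)
    {A' : Type u} [TopologicalSpace A']
    (G' : GroupoidOn (↥V) A' Set.univ)
    (e : {g : A // g ∈ G.res V} ≃ₜ A')
    (he_d : ∀ g : {g : A // g ∈ G.res V}, (G'.d (e g) : X) = G.d g.1)
    (he_r : ∀ g : {g : A // g ∈ G.res V}, (G'.r (e g) : X) = G.r g.1)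
    (he_mul : ∀ (g h : {g : A // g ∈ G.res V}) (hc : G.d g.1 = G.r h.1),
      e ⟨G.mul g.1 h.1,
         ⟨by rw [G.d_mul _ _ hc]; exact h.2.1,
          by rw [G.r_mul _ _ hc]; exact g.2.2⟩⟩ = G'.mul (e g) (e h)) :
    IsBoundaryActionGroupoid G' ∧
    ∀ U, OrbitData G U →
      OrbitData G' (Subtype.val ⁻¹' (U ∩ V)) ∧
      -- uniqueness of the open dense orbit of the reduction:
      ∀ W, OrbitData G' W → W = Subtype.val ⁻¹' (U ∩ V) := by
  have horb : ∀ U, OrbitData G U →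
      OrbitData G' (Subtype.val ⁻¹' (U ∩ V)) ∧
      ∀ W, OrbitData G' W → W = Subtype.val ⁻¹' (U ∩ V) := by
    intro U hU
    have h1 := orbit_transfer e he_d he_r he_mul hG.top hV hU
    exact ⟨h1, fun W hW => orbit_unique hW h1⟩
  refine ⟨⟨htop' e he_d he_r he_mul hG.top hV, ?_,
    cover_transfer e he_d he_r he_mul hV hG.cover⟩, horb⟩
  obtain ⟨U, hU⟩ := hG.orbit
  exact ⟨_, (horb U hU).1⟩
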